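/- If M is a divided R-module, then every proper submodule of M is a 2-absorbing primary submodule of M. -/

import Mathlib

open Submodule

variable {R : Type*} [CommRing R] {M : Type*} [AddCommGroup M] [Module R M]

/-- A prime submodule: proper, and `a • m ∈ P` implies `m ∈ P` or `a • ⊤ ≤ P`. -/
def IsPrimeSubmodule (P : Submodule R M) : Prop :=
  P ≠ ⊤ ∧ ∀ (a : R) (m : M), a • m ∈ P → m ∈ P ∨ a ∈ P.colon ⊤

/-- The `M`-radical of `N`: intersection of prime submodules containing `N`
(equal to `⊤` when there are none). -/
def mRad (N : Submodule R M) : Submodule R M :=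
  sInf {P : Submodule R M | IsPrimeSubmodule P ∧ N ≤ P}

/-- 2-absorbing primary submodule. -/
def Is2AbsorbingPrimary (N : Submodule R M) : Prop :=
  N ≠ ⊤ ∧ ∀ (a b : R) (m : M), (a * b) • m ∈ N →
    a • m ∈ mRad N ∨ b • m ∈ mRad N ∨ a * b ∈ N.colon ⊤

/-- Multiplication module: every submodule is `I • ⊤` for some ideal `I`. -/
def IsMultiplicationModule (R M : Type*) [CommRing R] [AddCommGroup M] [Module R M] : Prop :=
  ∀ N : Submodule R M, ∃ I : Ideal R, N = I • (⊤ : Submodule R M)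

/-- Primary submodule. -/
def IsPrimarySubmodule (P : Submodule R M) : Prop :=
  P ≠ ⊤ ∧ ∀ (a : R) (m : M), a • m ∈ P → m ∈ P ∨ a ∈ (P.colon ⊤).radical

/-- 2-absorbing primary ideal. -/
def Is2AbsorbingPrimaryIdeal {R : Type*} [CommRing R] (I : Ideal R) : Prop :=
  I ≠ ⊤ ∧ ∀ a b c : R, a * b * c ∈ I → a * b ∈ I ∨ a * c ∈ I.radical ∨ b * c ∈ I.radical

/-- 2-absorbing submodule. -/
def Is2AbsorbingSubmodule (K : Submodule R M) : Prop :=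
  K ≠ ⊤ ∧ ∀ (a b : R) (m : M), (a * b) • m ∈ K →
    a * b ∈ K.colon ⊤ ∨ a • m ∈ K ∨ b • m ∈ K

/-- Divided module: every prime submodule `P` satisfies `P ⊆ Rm` for all `m ∉ P`. -/
def IsDividedModule (R M : Type*) [CommRing R] [AddCommGroup M] [Module R M] : Prop :=
  ∀ P : Submodule R M, IsPrimeSubmodule P → ∀ m : M, m ∉ P → P ≤ Submodule.span R {m}


lemma primes_comparable (hM : IsDividedModule R M) {P Q : Submodule R M}
    (hP : IsPrimeSubmodule P) (hQ : IsPrimeSubmodule Q) : P ≤ Q ∨ Q ≤ P := by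
  by_cases h : P ≤ Q
  · exact Or.inl h
  · obtain ⟨p, hpP, hpQ⟩ := Set.not_subset.mp h
    refine Or.inr ((hM Q hQ p hpQ).trans ?_)
    exact (Submodule.span_singleton_le_iff_mem p P).mpr hpP

lemma prime_absorb {P : Submodule R M} (hP : IsPrimeSubmodule P) (a b : R) (m : M)
    (h : (a * b) • m ∈ P) : a • m ∈ P ∨ b • m ∈ P := by
  rw [mul_smul] at h
  rcases hP.2 a (b • m) h with h' | h'
  · exact Or.inr h'
  · exact Or.inl (Submodule.mem_colon.mp h' m (Submodule.mem_top (R := R) (M := M)))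

theorem stmt9 (hM : IsDividedModule R M) (N : Submodule R M) (hN : N ≠ ⊤) :
    Is2AbsorbingPrimary N := by
  refine ⟨hN, fun a b m h => ?_⟩
  by_cases ha : ∀ P ∈ {P : Submodule R M | IsPrimeSubmodule P ∧ N ≤ P}, a • m ∈ P
  · exact Or.inl (Submodule.mem_sInf.mpr ha)
  by_cases hb : ∀ P ∈ {P : Submodule R M | IsPrimeSubmodule P ∧ N ≤ P}, b • m ∈ P
  · exact Or.inr (Or.inl (Submodule.mem_sInf.mpr hb))
  exfalso
  push_neg at ha hb
  obtain ⟨P₁, ⟨hP₁, hNP₁⟩, ha₁⟩ := ha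
  obtain ⟨P₂, ⟨hP₂, hNP₂⟩, hb₂⟩ := hb
  rcases primes_comparable hM hP₁ hP₂ with hle | hle
  · rcases prime_absorb hP₁ a b m (hNP₁ h) with h' | h'
    · exact ha₁ h'
    · exact hb₂ (hle h')
  · rcases prime_absorb hP₂ a b m (hNP₂ h) with h' | h'
    · exact ha₁ (hle h')
    · exact hb₂ h'
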